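/- Let N ≥ 2 be an integer, c ∈ (0,N), σ > 0, and set a = c/N, b = (N²/c − 1)/(N − 1), θ = σb, γ = log c / log(N/c) (so that a^{γ+1} = 1/N and γ > −1), and κ = (N−1)/θ^{γ+1}. For an integer i ≥ 0 let p_t(i) = N^{−i}(δ_{0i} − 1)e^{−θ a^i t} + (N − 1) Σ_{j=i+1}^∞ N^{−j} e^{−θ a^j t} for t > 0, where δ_{0i} = 1 if i = 0 and 0 otherwise. Then for every integer i ≥ 0, lim_{t→∞} ( t^{γ+1} p_t(i) − κ · Σ_{j∈ℤ} (θ a^j t)^{γ+1} e^{−θ a^j t} ) = 0. -/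

import Mathlib

open Filter Topology

lemma aux_bound (s : ℝ) (hs : 0 < s) :
    ∃ C : ℝ, 0 < C ∧ ∀ x : ℝ, 0 ≤ x → x ^ s * Real.exp (-x) ≤ C * Real.exp (-(x / 2)) := by
  set m := ⌈s⌉₊ with hm
  refine ⟨2 ^ m * m.factorial + 1, by positivity, fun x hx => ?_⟩
  have h1 : x ^ s ≤ x ^ m + 1 := by
    rcases le_total x 1 with h | h
    · have : x ^ s ≤ 1 := Real.rpow_le_one hx h hs.le
      nlinarith [pow_nonneg hx m]
    · have h2 : x ^ s ≤ x ^ (m : ℝ) :=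
        Real.rpow_le_rpow_of_exponent_le h (Nat.le_ceil s)
      rw [Real.rpow_natCast] at h2
      linarith
  have h2 : x ^ m ≤ 2 ^ m * (m.factorial : ℝ) * Real.exp (x / 2) := by
    have hle := Real.pow_div_factorial_le_exp (x := x/2) (by positivity) m
    have hfac : (0:ℝ) < (m.factorial : ℝ) := by exact_mod_cast m.factorial_pos
    have hxm : (x / 2) ^ m = x ^ m / 2 ^ m := by rw [div_pow]
    rw [hxm, div_div] at hle
    have := (div_le_iff₀ (by positivity)).mp hle
    nlinarith
  have e2 : Real.exp (x / 2) * Real.exp (-x) = Real.exp (-(x / 2)) := by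
    rw [← Real.exp_add]; ring_nf
  calc x ^ s * Real.exp (-x) ≤ (x ^ m + 1) * Real.exp (-x) :=
        mul_le_mul_of_nonneg_right h1 (Real.exp_nonneg _)
    _ = x ^ m * Real.exp (-x) + Real.exp (-x) := by ring
    _ ≤ (2 ^ m * (m.factorial : ℝ)) * (Real.exp (x / 2) * Real.exp (-x)) + Real.exp (-(x / 2)) := by
        refine add_le_add ?_ (Real.exp_le_exp.mpr (by linarith))
        rw [← mul_assoc]
        exact mul_le_mul_of_nonneg_right h2 (Real.exp_nonneg _)
    _ = (2 ^ m * (m.factorial : ℝ)) * Real.exp (-(x / 2)) + Real.exp (-(x / 2)) := by rw [e2]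
    _ = (2 ^ m * (m.factorial : ℝ) + 1) * Real.exp (-(x / 2)) := by ring

lemma aux_expbound (u r : ℝ) (hu : 0 < u) (hr : 1 < r) (n : ℕ) :
    Real.exp (-(u * r ^ n)) ≤ Real.exp (-u) * Real.exp (-(u * (r - 1))) ^ n := by
  have hb : 1 + (n : ℝ) * (r - 1) ≤ r ^ n := by
    have := one_add_mul_le_pow (by linarith : (-2:ℝ) ≤ r - 1) n
    simpa using this
  have : u + (n : ℝ) * (u * (r - 1)) ≤ u * r ^ n := by nlinarith
  calc Real.exp (-(u * r ^ n)) ≤ Real.exp (-(u + (n : ℝ) * (u * (r - 1)))) := by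
        rw [Real.exp_le_exp]; linarith
    _ = Real.exp (-u) * Real.exp (-(u * (r - 1))) ^ n := by
        rw [← Real.exp_nat_mul, ← Real.exp_add]; ring_nf

lemma aux_summable (s x0 r t : ℝ) (hs : 0 < s) (hx0 : 0 < x0) (hr : 1 < r) (ht : 0 < t) :
    Summable (fun n : ℕ => (x0 * r ^ n * t) ^ s * Real.exp (-(x0 * r ^ n * t))) := by
  obtain ⟨C, hC, hbd⟩ := aux_bound s hs
  have hu : 0 < x0 * t / 2 := by positivity
  have hq0 : 0 ≤ Real.exp (-(x0 * t / 2 * (r - 1))) := (Real.exp_pos _).le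
  have hq1 : Real.exp (-(x0 * t / 2 * (r - 1))) < 1 := by
    rw [Real.exp_lt_one_iff]; nlinarith
  refine Summable.of_nonneg_of_le (fun n => by positivity) (fun n => ?_)
    (((summable_geometric_of_lt_one hq0 hq1).mul_left
      (C * Real.exp (-(x0 * t / 2)))))
  have h1 : (x0 * r ^ n * t) ^ s * Real.exp (-(x0 * r ^ n * t)) ≤
      C * Real.exp (-(x0 * r ^ n * t / 2)) := hbd _ (by positivity)
  have h2 : Real.exp (-(x0 * r ^ n * t / 2)) ≤
      Real.exp (-(x0 * t / 2)) * Real.exp (-(x0 * t / 2 * (r - 1))) ^ n := by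
    have := aux_expbound (x0 * t / 2) r hu hr n
    have harg : x0 * t / 2 * r ^ n = x0 * r ^ n * t / 2 := by ring
    rwa [harg] at this
  calc (x0 * r ^ n * t) ^ s * Real.exp (-(x0 * r ^ n * t))
      ≤ C * Real.exp (-(x0 * r ^ n * t / 2)) := h1
    _ ≤ C * (Real.exp (-(x0 * t / 2)) * Real.exp (-(x0 * t / 2 * (r - 1))) ^ n) :=
        mul_le_mul_of_nonneg_left h2 hC.le
    _ = C * Real.exp (-(x0 * t / 2)) * Real.exp (-(x0 * t / 2 * (r - 1))) ^ n := by ring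

lemma aux_tendsto (s x0 r : ℝ) (hs : 0 < s) (hx0 : 0 < x0) (hr : 1 < r) :
    Tendsto (fun t : ℝ => ∑' n : ℕ, (x0 * r ^ n * t) ^ s * Real.exp (-(x0 * r ^ n * t)))
      atTop (𝓝 0) := by
  obtain ⟨C, hC, hbd⟩ := aux_bound s hs
  have hq0 : 0 ≤ Real.exp (-(r - 1)) := (Real.exp_pos _).le
  have hq1 : Real.exp (-(r - 1)) < 1 := by
    rw [Real.exp_lt_one_iff]; linarith
  have hgeo : Summable (fun n : ℕ => Real.exp (-(r - 1)) ^ n) :=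
    summable_geometric_of_lt_one hq0 hq1
  refine squeeze_zero' (g := fun t => C * (1 - Real.exp (-(r - 1)))⁻¹ * Real.exp (-(x0 / 2 * t)))
    ?_ ?_ ?_
  · filter_upwards [eventually_gt_atTop (0:ℝ)] with t ht
    exact tsum_nonneg (fun n => by positivity)
  · filter_upwards [eventually_ge_atTop (max (2 / x0) 1)] with t ht
    have ht1 : (1:ℝ) ≤ t := le_trans (le_max_right _ _) ht
    have ht0 : 0 < t := lt_of_lt_of_le one_pos ht1
    have hu1 : 1 ≤ x0 * t / 2 := by
      rw [le_div_iff₀ (by norm_num : (0:ℝ) < 2)]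
      have : 2 / x0 ≤ t := le_trans (le_max_left _ _) ht
      calc (1:ℝ) * 2 = x0 * (2 / x0) := by field_simp
        _ ≤ x0 * t := mul_le_mul_of_nonneg_left this hx0.le
    have hterm : ∀ n : ℕ, (x0 * r ^ n * t) ^ s * Real.exp (-(x0 * r ^ n * t)) ≤
        C * Real.exp (-(x0 / 2 * t)) * Real.exp (-(r - 1)) ^ n := by
      intro n
      have h1 : (x0 * r ^ n * t) ^ s * Real.exp (-(x0 * r ^ n * t)) ≤
          C * Real.exp (-(x0 * r ^ n * t / 2)) := hbd _ (by positivity)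
      have h2 : Real.exp (-(x0 * r ^ n * t / 2)) ≤
          Real.exp (-(x0 / 2 * t)) * Real.exp (-(r - 1)) ^ n := by
        have hb : 1 + (n : ℝ) * (r - 1) ≤ r ^ n := by
          simpa using one_add_mul_le_pow (by linarith : (-2:ℝ) ≤ r - 1) n
        have hkey : x0 / 2 * t + (n : ℝ) * (r - 1) ≤ x0 * r ^ n * t / 2 := by
          have hu : x0 * t / 2 * (1 + (n : ℝ) * (r - 1)) ≤ x0 * t / 2 * r ^ n :=
            mul_le_mul_of_nonneg_left hb (by positivity)
          have hnn : (0:ℝ) ≤ (n : ℝ) * (r - 1) :=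
            mul_nonneg (Nat.cast_nonneg n) (by linarith)
          have hn : (n : ℝ) * (r - 1) ≤ x0 * t / 2 * ((n : ℝ) * (r - 1)) := by
            calc (n : ℝ) * (r - 1) = 1 * ((n : ℝ) * (r - 1)) := (one_mul _).symm
              _ ≤ x0 * t / 2 * ((n : ℝ) * (r - 1)) := mul_le_mul_of_nonneg_right hu1 hnn
          nlinarith
        calc Real.exp (-(x0 * r ^ n * t / 2))
            ≤ Real.exp (-(x0 / 2 * t + (n : ℝ) * (r - 1))) := by
              rw [Real.exp_le_exp]; linarith
          _ = Real.exp (-(x0 / 2 * t)) * Real.exp (-(r - 1)) ^ n := by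
              rw [← Real.exp_nat_mul, ← Real.exp_add]; ring_nf
      calc (x0 * r ^ n * t) ^ s * Real.exp (-(x0 * r ^ n * t))
          ≤ C * Real.exp (-(x0 * r ^ n * t / 2)) := h1
        _ ≤ C * (Real.exp (-(x0 / 2 * t)) * Real.exp (-(r - 1)) ^ n) :=
            mul_le_mul_of_nonneg_left h2 hC.le
        _ = C * Real.exp (-(x0 / 2 * t)) * Real.exp (-(r - 1)) ^ n := by ring
    calc (∑' n : ℕ, (x0 * r ^ n * t) ^ s * Real.exp (-(x0 * r ^ n * t)))
        ≤ ∑' n : ℕ, C * Real.exp (-(x0 / 2 * t)) * Real.exp (-(r - 1)) ^ n :=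
          Summable.tsum_le_tsum hterm (aux_summable s x0 r t hs hx0 hr ht0)
            (hgeo.mul_left _)
      _ = C * Real.exp (-(x0 / 2 * t)) * (1 - Real.exp (-(r - 1)))⁻¹ := by
          rw [tsum_mul_left, tsum_geometric_of_lt_one hq0 hq1]
      _ = C * (1 - Real.exp (-(r - 1)))⁻¹ * Real.exp (-(x0 / 2 * t)) := by ring
  · have hexp : Tendsto (fun t : ℝ => Real.exp (-(x0 / 2 * t))) atTop (𝓝 0) := by
      have h1 : Tendsto (fun t : ℝ => x0 / 2 * t) atTop atTop :=
        Tendsto.const_mul_atTop (by positivity) tendsto_id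
      exact Real.tendsto_exp_neg_atTop_nhds_zero.comp h1
    simpa using hexp.const_mul (C * (1 - Real.exp (-(r - 1)))⁻¹)
theorem stmt10 (N : ℕ) (hN : 2 ≤ N) (c σ : ℝ) (hc0 : 0 < c) (hcN : c < N) (hσ : 0 < σ)
    (a b θ γ κ : ℝ)
    (ha : a = c / N) (hb : b = ((N:ℝ) ^ 2 / c - 1) / ((N:ℝ) - 1)) (hθ : θ = σ * b)
    (hγ : γ = Real.log c / Real.log ((N:ℝ) / c))
    (hκ : κ = ((N:ℝ) - 1) / θ ^ (γ + 1))
    (p : ℕ → ℝ → ℝ)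
    (hp : ∀ (i : ℕ), ∀ t > 0, p i t =
      ((N:ℝ) ^ i)⁻¹ * ((if i = 0 then (1:ℝ) else 0) - 1) * Real.exp (-(θ * a ^ i * t)) +
        ((N:ℝ) - 1) *
          ∑' j : ℕ, ((N:ℝ) ^ (i + 1 + j))⁻¹ * Real.exp (-(θ * a ^ (i + 1 + j) * t))) :
    ∀ i : ℕ, Tendsto (fun t : ℝ =>
        t ^ (γ + 1) * p i t -
          κ * ∑' j : ℤ, (θ * a ^ j * t) ^ (γ + 1) * Real.exp (-(θ * a ^ j * t)))
      atTop (𝓝 0) := by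
  -- basic facts
  have hN1 : (1:ℝ) < N := by
    have : (2:ℝ) ≤ N := by exact_mod_cast hN
    linarith
  have hN0 : (0:ℝ) < N := by linarith
  have ha0 : 0 < a := ha ▸ div_pos hc0 hN0
  have ha1 : a < 1 := ha ▸ (div_lt_one hN0).mpr hcN
  have hane : a ≠ 0 := ha0.ne'
  have hb0 : 0 < b := by
    rw [hb]
    apply div_pos
    · have h1 : c < (N:ℝ) ^ 2 := by nlinarith
      have h2 : 1 < (N:ℝ) ^ 2 / c := (one_lt_div hc0).mpr h1
      linarith
    · linarith
  have hθ0 : 0 < θ := hθ ▸ mul_pos hσ hb0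
  have hlogNc : Real.log ((N:ℝ) / c) = Real.log N - Real.log c :=
    Real.log_div hN0.ne' hc0.ne'
  have hlogN : 0 < Real.log N := Real.log_pos hN1
  have hlogpos : 0 < Real.log ((N:ℝ) / c) := Real.log_pos ((one_lt_div hc0).mpr hcN)
  have hs1 : γ + 1 = Real.log N / Real.log ((N:ℝ) / c) := by
    rw [hγ]
    field_simp
    rw [hlogNc]
    ring
  have hs0 : 0 < γ + 1 := hs1 ▸ div_pos hlogN hlogpos
  have hloga : Real.log a = - Real.log ((N:ℝ) / c) := by
    rw [ha, Real.log_div hc0.ne' hN0.ne', hlogNc]; ring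
  have hkey : a ^ (γ + 1) = ((N:ℝ))⁻¹ := by
    rw [Real.rpow_def_of_pos ha0, hloga, hs1]
    rw [show -Real.log ((N:ℝ) / c) * (Real.log N / Real.log ((N:ℝ) / c)) = -Real.log N by
      field_simp]
    rw [Real.exp_neg, Real.exp_log hN0]
  have hpow : ∀ m : ℕ, ((a:ℝ) ^ m) ^ (γ + 1) = (((N:ℝ) ^ m))⁻¹ := by
    intro m
    rw [← Real.rpow_natCast a m, ← Real.rpow_mul ha0.le, mul_comm, Real.rpow_mul ha0.le,
      hkey, Real.rpow_natCast, inv_pow]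
  have hθs : 0 < θ ^ (γ + 1) := Real.rpow_pos_of_pos hθ0 _
  intro i
  have hx0 : 0 < θ * a ^ i := mul_pos hθ0 (pow_pos ha0 i)
  have hr : 1 < a⁻¹ := (one_lt_inv₀ ha0).mpr ha1
  -- the limit function
  have hG : Tendsto (fun t : ℝ =>
      ((N:ℝ) ^ i)⁻¹ * ((if i = 0 then (1:ℝ) else 0) - 1) *
        (t ^ (γ + 1) * Real.exp (-(θ * a ^ i * t))) -
      κ * ∑' n : ℕ, (θ * a ^ i * a⁻¹ ^ n * t) ^ (γ + 1) *
        Real.exp (-(θ * a ^ i * a⁻¹ ^ n * t))) atTop (𝓝 0) := by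
    have h1 : Tendsto (fun t : ℝ => t ^ (γ + 1) * Real.exp (-(θ * a ^ i * t)))
        atTop (𝓝 0) := by
      have := tendsto_rpow_mul_exp_neg_mul_atTop_nhds_zero (γ + 1) (θ * a ^ i) hx0
      simpa [neg_mul] using this
    have h2 := aux_tendsto (γ + 1) (θ * a ^ i) a⁻¹ hs0 hx0 hr
    have := (h1.const_mul (((N:ℝ) ^ i)⁻¹ * ((if i = 0 then (1:ℝ) else 0) - 1))).sub
      (h2.const_mul κ)
    simpa using this
  refine Tendsto.congr' ?_ hG
  filter_upwards [eventually_gt_atTop (0:ℝ)] with t ht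
  -- pointwise identity for t > 0
  rw [hp i t ht]
  have hfnat : ∀ m : ℕ, (θ * a ^ m * t) ^ (γ + 1) =
      θ ^ (γ + 1) * t ^ (γ + 1) * ((N:ℝ) ^ m)⁻¹ := by
    intro m
    rw [Real.mul_rpow (mul_nonneg hθ0.le (pow_nonneg ha0.le m)) ht.le,
      Real.mul_rpow hθ0.le (pow_nonneg ha0.le m), hpow m]
    ring
  have hupterm : ∀ n : ℕ,
      (θ * a ^ ((n:ℤ) + ((i:ℤ) + 1)) * t) ^ (γ + 1) *
        Real.exp (-(θ * a ^ ((n:ℤ) + ((i:ℤ) + 1)) * t)) =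
      (θ ^ (γ + 1) * t ^ (γ + 1)) *
        (((N:ℝ) ^ (i + 1 + n))⁻¹ * Real.exp (-(θ * a ^ (i + 1 + n) * t))) := by
    intro n
    have hcast : ((n:ℤ) + ((i:ℤ) + 1)) = ((i + 1 + n : ℕ) : ℤ) := by push_cast; ring
    rw [hcast, zpow_natCast, hfnat (i + 1 + n)]
    ring
  have hloterm : ∀ n : ℕ,
      (θ * a ^ (-((n:ℤ) + 1) + ((i:ℤ) + 1)) * t) ^ (γ + 1) *
        Real.exp (-(θ * a ^ (-((n:ℤ) + 1) + ((i:ℤ) + 1)) * t)) =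
      (θ * a ^ i * a⁻¹ ^ n * t) ^ (γ + 1) *
        Real.exp (-(θ * a ^ i * a⁻¹ ^ n * t)) := by
    intro n
    have hcast : (-((n:ℤ) + 1) + ((i:ℤ) + 1)) = (i:ℤ) - (n:ℤ) := by ring
    have hzp : a ^ (-((n:ℤ) + 1) + ((i:ℤ) + 1)) = a ^ i * a⁻¹ ^ n := by
      rw [hcast, zpow_sub₀ hane, zpow_natCast, zpow_natCast, div_eq_mul_inv, inv_pow]
    rw [hzp, ← mul_assoc]
  have hsumup : Summable (fun n : ℕ =>
      (θ * a ^ ((n:ℤ) + ((i:ℤ) + 1)) * t) ^ (γ + 1) *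
        Real.exp (-(θ * a ^ ((n:ℤ) + ((i:ℤ) + 1)) * t))) := by
    rw [summable_congr hupterm]
    apply Summable.mul_left
    refine Summable.of_nonneg_of_le (fun n => by positivity) (fun n => ?_)
      ((summable_geometric_of_lt_one (by positivity) ((inv_lt_one₀ hN0).mpr hN1)).mul_left
        (((N:ℝ) ^ (i + 1))⁻¹))
    have h1 : Real.exp (-(θ * a ^ (i + 1 + n) * t)) ≤ 1 := by
      rw [Real.exp_le_one_iff]
      have : 0 < θ * a ^ (i + 1 + n) * t := by positivity
      linarith
    have h2 : ((N:ℝ) ^ (i + 1 + n))⁻¹ = ((N:ℝ) ^ (i + 1))⁻¹ * ((N:ℝ)⁻¹) ^ n := by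
      rw [pow_add, mul_inv, inv_pow]
    calc ((N:ℝ) ^ (i + 1 + n))⁻¹ * Real.exp (-(θ * a ^ (i + 1 + n) * t))
        ≤ ((N:ℝ) ^ (i + 1 + n))⁻¹ * 1 := by
          apply mul_le_mul_of_nonneg_left h1 (by positivity)
      _ = ((N:ℝ) ^ (i + 1))⁻¹ * ((N:ℝ)⁻¹) ^ n := by rw [mul_one, h2]
  have hsumlo : Summable (fun n : ℕ =>
      (θ * a ^ (-((n:ℤ) + 1) + ((i:ℤ) + 1)) * t) ^ (γ + 1) *
        Real.exp (-(θ * a ^ (-((n:ℤ) + 1) + ((i:ℤ) + 1)) * t))) := by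
    rw [summable_congr hloterm]
    have := aux_summable (γ + 1) (θ * a ^ i) a⁻¹ t hs0 hx0 hr ht
    exact this
  have hsplit : (∑' j : ℤ, (θ * a ^ j * t) ^ (γ + 1) * Real.exp (-(θ * a ^ j * t))) =
      (∑' n : ℕ, (θ * a ^ ((n:ℤ) + ((i:ℤ) + 1)) * t) ^ (γ + 1) *
        Real.exp (-(θ * a ^ ((n:ℤ) + ((i:ℤ) + 1)) * t))) +
      (∑' n : ℕ, (θ * a ^ (-((n:ℤ) + 1) + ((i:ℤ) + 1)) * t) ^ (γ + 1) *
        Real.exp (-(θ * a ^ (-((n:ℤ) + 1) + ((i:ℤ) + 1)) * t))) := by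
    rw [← (Equiv.addRight ((i:ℤ) + 1)).tsum_eq
      (fun j : ℤ => (θ * a ^ j * t) ^ (γ + 1) * Real.exp (-(θ * a ^ j * t)))]
    exact tsum_of_nat_of_neg_add_one hsumup hsumlo
  rw [hsplit, tsum_congr hloterm, mul_add κ]
  have hupsum : κ * ∑' n : ℕ, (θ * a ^ ((n:ℤ) + ((i:ℤ) + 1)) * t) ^ (γ + 1) *
        Real.exp (-(θ * a ^ ((n:ℤ) + ((i:ℤ) + 1)) * t)) =
      t ^ (γ + 1) * (((N:ℝ) - 1) *
        ∑' n : ℕ, ((N:ℝ) ^ (i + 1 + n))⁻¹ * Real.exp (-(θ * a ^ (i + 1 + n) * t))) := by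
    rw [tsum_congr hupterm, tsum_mul_left, hκ]
    set S := ∑' n : ℕ, ((N:ℝ) ^ (i + 1 + n))⁻¹ * Real.exp (-(θ * a ^ (i + 1 + n) * t)) with hS
    field_simp
  rw [hupsum]
  ring
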